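/- In the extended Kalman filter update P_t = P_{t−1}/τ − k kᵀ z with z = 1 + gᵀP_{t−1}g/τ and k = P_{t−1}g/(zτ), if P_{t−1} is symmetric positive definite, g ∈ ℝᵈ, and 0 < τ ≤ 1, then P_t is symmetric positive definite. -/

import Mathlib

open Matrix

lemma cs_aux (d : ℕ) (P : Matrix (Fin d) (Fin d) ℝ) (hP : P.PosDef)
    (x g : Fin d → ℝ) :
    (x ⬝ᵥ P.mulVec g)^2 ≤ (x ⬝ᵥ P.mulVec x) * (g ⬝ᵥ P.mulVec g) := by
  have hsymm : ∀ u v : Fin d → ℝ, u ⬝ᵥ P.mulVec v = v ⬝ᵥ P.mulVec u := by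
    intro u v
    have hPt : Pᵀ = P := hP.1
    calc u ⬝ᵥ P.mulVec v = u ᵥ* P ⬝ᵥ v := dotProduct_mulVec u P v
    _ = Pᵀ.mulVec u ⬝ᵥ v := by rw [mulVec_transpose]
    _ = v ⬝ᵥ P.mulVec u := by rw [hPt, dotProduct_comm]
  by_cases hg : g = 0
  · simp [hg]
  · set a := x ⬝ᵥ P.mulVec x with ha
    set b := x ⬝ᵥ P.mulVec g with hb
    set c := g ⬝ᵥ P.mulVec g with hc
    have hcpos : 0 < c := by
      have := hP.dotProduct_mulVec_pos hg
      simpa using this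
    have h := hP.posSemidef.dotProduct_mulVec_nonneg (c • x - b • g)
    have hexp : star (c • x - b • g) ⬝ᵥ P.mulVec (c • x - b • g)
        = c * (c * a - b * b) := by
      simp only [star_trivial, mulVec_sub, mulVec_smul, dotProduct_sub,
        sub_dotProduct, dotProduct_smul, smul_dotProduct, smul_eq_mul]
      have : g ⬝ᵥ P.mulVec x = b := hsymm g x
      rw [this, ← ha, ← hb, ← hc]
      ring
    rw [hexp] at h
    nlinarith

theorem stmt_7 (d : ℕ) (P : Matrix (Fin d) (Fin d) ℝ) (hP : P.PosDef)
    (g : Fin d → ℝ) (τ : ℝ) (hτ : 0 < τ) (hτ1 : τ ≤ 1)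
    (z : ℝ) (hz : z = 1 + (g ⬝ᵥ P.mulVec g) / τ) :
    let k : Fin d → ℝ := (1 / (z * τ)) • P.mulVec g
    (τ⁻¹ • P - z • vecMulVec k k).PosDef := by
  intro k
  have hc0 : 0 < g ⬝ᵥ P.mulVec g ∨ g ⬝ᵥ P.mulVec g = 0 := by
    by_cases hg : g = 0
    · right; simp [hg]
    · left; simpa using hP.dotProduct_mulVec_pos hg
  have hcnn : 0 ≤ g ⬝ᵥ P.mulVec g := by rcases hc0 with h | h <;> [exact le_of_lt h; exact le_of_eq h.symm]
  have hzpos : 0 < z := by rw [hz]; positivity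
  rw [posDef_iff_dotProduct_mulVec]
  constructor
  · refine Matrix.IsHermitian.sub ?_ ?_
    · show (τ⁻¹ • P)ᴴ = _
      rw [conjTranspose_smul, hP.1]
      simp
    · show (z • vecMulVec k k)ᴴ = _
      ext i j
      simp [vecMulVec, mul_comm]
  · intro x hx
    have hxq : 0 < x ⬝ᵥ P.mulVec x := by simpa using hP.dotProduct_mulVec_pos hx
    have hcs := cs_aux d P hP x g
    set a := x ⬝ᵥ P.mulVec x
    set b := x ⬝ᵥ P.mulVec g
    set c := g ⬝ᵥ P.mulVec g
    have hquad : star x ⬝ᵥ (τ⁻¹ • P - z • vecMulVec k k).mulVec x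
        = a / τ - b^2 / (z * τ^2) := by
      have hk : ∀ y : Fin d → ℝ, (vecMulVec k k).mulVec y = (k ⬝ᵥ y) • k := by
        intro y; ext i
        simp only [vecMulVec, mulVec, dotProduct, of_apply, Pi.smul_apply, smul_eq_mul,
          Finset.sum_mul]
        exact Finset.sum_congr rfl fun j _ => by ring
      simp only [star_trivial, sub_mulVec, smul_mulVec, dotProduct_sub,
        dotProduct_smul, hk, smul_eq_mul]
      have hkx : k ⬝ᵥ x = (1 / (z * τ)) * b := by
        simp only [k, smul_dotProduct, smul_eq_mul]
        congr 1
        rw [dotProduct_comm]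
        -- P.mulVec g ⬝ᵥ x vs x ⬝ᵥ P.mulVec g : dotProduct_comm gives exactly
      have hxk : x ⬝ᵥ k = (1 / (z * τ)) * b := by
        simp only [k, dotProduct_smul, smul_eq_mul]
        rfl
      rw [hkx, hxk]
      have hzτ : z * τ ≠ 0 := by positivity
      field_simp
      ring
    rw [hquad]
    have hzτ : z * τ = τ + c := by rw [hz]; field_simp
    have hkey : b^2 < a * (z * τ) := by
      calc b^2 ≤ a * c := hcs
      _ < a * (τ + c) := by nlinarith
      _ = a * (z * τ) := by rw [hzτ]
    rw [div_sub_div _ _ (ne_of_gt hτ) (by positivity : z * τ^2 ≠ 0)]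
    apply div_pos
    · nlinarith
    · positivity
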